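/- Let F ⊆ L be a minimal field extension (no intermediate fields) and let D be a finite-dimensional central division F-algebra. Then D = F ⊗_F D is a maximal F-subalgebra of L ⊗_F D: any F-subalgebra of L ⊗_F D properly containing 1 ⊗ D equals L ⊗_F D. -/

import Mathlib

open Polynomial

/-- In a minimal field extension with no intermediate fields, every element is integral. -/
theorem aux_integral {F L : Type*} [Field F] [Field L] [Algebra F L]
    (hmin : ∀ K' : IntermediateField F L, K' = ⊥ ∨ K' = ⊤) (x : L) : IsIntegral F x := by
  rw [← isAlgebraic_iff_isIntegral]
  by_contra hx
  have hx : Transcendental F x := hx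
  have hy : Transcendental F (x * x) := by
    intro ⟨p, hp, hae⟩
    refine hx ⟨expand F 2 p, (Polynomial.expand_ne_zero two_pos).mpr hp, ?_⟩
    rw [expand_aeval]
    rwa [pow_two]
  have h1 : IntermediateField.adjoin F {x * x} = ⊤ := by
    rcases hmin (IntermediateField.adjoin F {x * x}) with h | h
    · exfalso
      have : x * x ∈ (⊥ : IntermediateField F L) := by
        rw [← h]; exact IntermediateField.mem_adjoin_simple_self F (x * x)
      rw [IntermediateField.mem_bot] at this
      obtain ⟨c, hc⟩ := this
      exact hy (hc ▸ isAlgebraic_algebraMap c)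
    · exact h
  have hx_mem : x ∈ IntermediateField.adjoin F {x * x} := h1 ▸ trivial
  rw [IntermediateField.mem_adjoin_simple_iff] at hx_mem
  obtain ⟨r, s, hrs⟩ := hx_mem
  by_cases hs : aeval (x * x) s = 0
  · rw [hs, div_zero] at hrs
    exact hx (hrs ▸ ⟨X, X_ne_zero, by simp⟩)
  · have hmul : x * aeval (x * x) s = aeval (x * x) r := by
      exact (eq_div_iff hs).mp hrs
    have hP : aeval x (X * expand F 2 s - expand F 2 r) = 0 := by
      simp only [map_sub, map_mul, aeval_X, expand_aeval, pow_two]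
      rw [hmul, sub_self]
    have hzero : X * expand F 2 s - expand F 2 r = 0 := by
      by_contra h0
      exact hx ⟨_, h0, hP⟩
    have hcoeff : ∀ k, s.coeff k = 0 := by
      intro k
      have h2 : (X * expand F 2 s).coeff (2 * k + 1) = (expand F 2 r).coeff (2 * k + 1) := by
        rw [← sub_eq_zero, ← coeff_sub, hzero, coeff_zero]
      rw [coeff_X_mul, coeff_expand two_pos, coeff_expand two_pos] at h2
      simp only [Nat.mul_div_cancel_left _ two_pos, dvd_mul_right, if_pos] at h2
      rw [h2]
      have : ¬ (2 ∣ 2 * k + 1) := by omega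
      rw [if_neg this]
    exact hs (by rw [show s = 0 from Polynomial.ext hcoeff]; simp)

theorem aux_dichotomy {F L : Type*} [Field F] [Field L] [Algebra F L]
    (hmin : ∀ K' : IntermediateField F L, K' = ⊥ ∨ K' = ⊤)
    (V : Subalgebra F L) : V = ⊥ ∨ V = ⊤ := by
  by_cases hV : V = ⊥
  · exact Or.inl hV
  right
  obtain ⟨x, hxV, hxb⟩ := SetLike.exists_of_lt (lt_of_le_of_ne (bot_le : (⊥ : Subalgebra F L) ≤ V) (Ne.symm hV))
  have hxint : IsIntegral F x := aux_integral hmin x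
  have hadj : IntermediateField.adjoin F {x} = ⊤ := by
    rcases hmin (IntermediateField.adjoin F {x}) with h | h
    · exfalso
      have : x ∈ (⊥ : IntermediateField F L) := h ▸ IntermediateField.mem_adjoin_simple_self F x
      rw [IntermediateField.mem_bot] at this
      exact hxb (by rwa [Algebra.mem_bot])
    · exact h
  have h2 : (IntermediateField.adjoin F {x}).toSubalgebra = Algebra.adjoin F {x} :=
    IntermediateField.adjoin_simple_toSubalgebra_of_isAlgebraic hxint.isAlgebraic
  rw [hadj, IntermediateField.top_toSubalgebra] at h2
  rw [eq_top_iff, ← h2.symm]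
  exact Algebra.adjoin_le (Set.singleton_subset_iff.mpr hxV)

open TensorProduct

section

variable {F D : Type*} [Field F] [DivisionRing D] [Algebra F D]

/-- coordinate map on the second tensor factor -/
noncomputable def coordT {ι : Type*} (b : Module.Basis ι F D) (M : Type*) [AddCommGroup M]
    [Module F M] (i : ι) : M ⊗[F] D →ₗ[F] M :=
  (TensorProduct.rid F M).toLinearMap ∘ₗ (LinearMap.lTensor M (b.coord i))

theorem coordT_tmul {ι : Type*} (b : Module.Basis ι F D) {M : Type*} [AddCommGroup M]
    [Module F M] (i : ι) (m : M) (d : D) :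
    coordT b M i (m ⊗ₜ[F] d) = b.repr d i • m := by
  simp [coordT, Module.Basis.coord_apply]

theorem sum_coordT {ι : Type*} [Fintype ι] (b : Module.Basis ι F D) {M : Type*} [AddCommGroup M]
    [Module F M] (z : M ⊗[F] D) : ∑ i, (coordT b M i z) ⊗ₜ[F] (b i) = z := by
  induction z with
  | zero => simp
  | tmul m d =>
      simp only [coordT_tmul]
      simp_rw [TensorProduct.smul_tmul]
      rw [← TensorProduct.tmul_sum, Module.Basis.sum_repr]
  | add x y hx hy =>
      simp only [map_add, TensorProduct.add_tmul, Finset.sum_add_distrib, hx, hy]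

/-- The map `D ⊗ D → End_F D`, `a ⊗ c ↦ (x ↦ a * x * c)`. -/
noncomputable def phiLR : D ⊗[F] D →ₗ[F] (D →ₗ[F] D) :=
  TensorProduct.lift
    { toFun := fun a =>
        { toFun := fun c => (LinearMap.mulRight F c) ∘ₗ (LinearMap.mulLeft F a)
          map_add' := fun c c' => by ext x; simp [mul_add]
          map_smul' := fun r c => by ext x; simp }
      map_add' := fun a a' => by ext c x; simp [add_mul]
      map_smul' := fun r a => by ext c x; simp [smul_mul_assoc] }

theorem phiLR_tmul (a c x : D) : phiLR (a ⊗ₜ[F] c) x = a * x * c := by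
  simp [phiLR]

/-- Artin–Whaples style independence lemma. -/
theorem artin_whaples
    (hcentral : ∀ d : D, (∀ x : D, d * x = x * d) → ∃ c : F, d = algebraMap F D c) :
    ∀ (n : ℕ) (e a : Fin n → D), LinearIndependent F e →
      (∀ x : D, ∑ j, a j * x * e j = 0) → ∀ j, a j = 0 := by
  intro n
  induction n with
  | zero => intro e a _ _ j; exact absurd j.2 (by omega)
  | succ n IH =>
      intro e a hli h
      by_cases ha0 : a 0 = 0
      · have htail : ∀ j : Fin n, a j.succ = 0 := by
          apply IH (fun j => e j.succ) (fun j => a j.succ)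
            (hli.comp Fin.succ (Fin.succ_injective n))
          intro x
          have := h x
          rwa [Fin.sum_univ_succ, ha0, zero_mul, zero_mul, zero_add] at this
        intro j
        refine Fin.cases ha0 htail j
      · exfalso
        set a' : Fin (n + 1) → D := fun j => (a 0)⁻¹ * a j with ha'
        have h' : ∀ x : D, ∑ j, a' j * x * e j = 0 := by
          intro x
          have : (a 0)⁻¹ * ∑ j, a j * x * e j = 0 := by rw [h x, mul_zero]
          rw [Finset.mul_sum] at this
          simpa [ha', mul_assoc] using this
        have ha'0 : a' 0 = 1 := inv_mul_cancel₀ ha0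
        have hcomm : ∀ (j : Fin n) (y : D), a' j.succ * y = y * a' j.succ := by
          intro j y
          have key : ∀ x : D, ∑ k : Fin n,
              (a' k.succ * y - y * a' k.succ) * x * e k.succ = 0 := by
            intro x
            have h1 := h' (y * x)
            have h2 : y * ∑ j, a' j * x * e j = 0 := by rw [h' x, mul_zero]
            rw [Finset.mul_sum] at h2
            have h3 : ∑ j, (a' j * y - y * a' j) * x * e j = 0 := by
              have := sub_eq_zero.mpr (h1.trans h2.symm)
              rw [← Finset.sum_sub_distrib] at this
              rw [← this]
              exact Finset.sum_congr rfl fun j _ => by noncomm_ring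
            rwa [Fin.sum_univ_succ, ha'0, one_mul, mul_one, sub_self, zero_mul,
              zero_mul, zero_add] at h3
          have := IH (fun k => e k.succ) (fun k => a' k.succ * y - y * a' k.succ)
            (hli.comp Fin.succ (Fin.succ_injective n)) key j
          linear_combination (norm := noncomm_ring) this
        have hc : ∀ j : Fin n, ∃ c : F, a' j.succ = algebraMap F D c := by
          intro j
          exact hcentral _ (fun y => hcomm j y)
        choose c hcval using hc
        set w : Fin (n + 1) → F := Fin.cons 1 c with hw
        have hdep : ∑ j, w j • e j = 0 := by
          have := h' 1
          simp only [mul_one] at this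
          rw [Fin.sum_univ_succ] at this ⊢
          rw [hw] at *
          simp only [Fin.cons_zero, Fin.cons_succ, one_smul]
          rw [ha'0, one_mul] at this
          rw [← this]
          congr 1
          exact Finset.sum_congr rfl fun j _ => by rw [hcval j, Algebra.smul_def]
        have := Fintype.linearIndependent_iff.mp hli w hdep 0
        simp [hw] at this
  
end

section
variable {F D : Type*} [Field F] [DivisionRing D] [Algebra F D]

theorem phiLR_surjective [FiniteDimensional F D]
    (hcentral : ∀ d : D, (∀ x : D, d * x = x * d) → ∃ c : F, d = algebraMap F D c) :
    Function.Surjective (phiLR : D ⊗[F] D →ₗ[F] (D →ₗ[F] D)) := by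
  have hinj : Function.Injective (phiLR : D ⊗[F] D →ₗ[F] (D →ₗ[F] D)) := by
    rw [← LinearMap.ker_eq_bot, Submodule.eq_bot_iff]
    intro t ht
    rw [LinearMap.mem_ker] at ht
    set b : Module.Basis (Fin (Module.finrank F D)) F D := Module.finBasis F D with hb
    have hrep := sum_coordT b t
    have hz : ∀ x : D, ∑ j, (coordT b D j t) * x * (b j) = 0 := by
      intro x
      have h1 : phiLR t x = 0 := by rw [ht]; rfl
      rw [← h1]
      conv_rhs => rw [← hrep]
      rw [map_sum, LinearMap.sum_apply]
      exact Finset.sum_congr rfl fun j _ => (phiLR_tmul _ _ _).symm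
    have := artin_whaples hcentral _ b (fun j => coordT b D j t) b.linearIndependent hz
    rw [← hrep]
    simp only [this, TensorProduct.zero_tmul, Finset.sum_const_zero]
  exact (LinearMap.injective_iff_surjective_of_finrank_eq_finrank
    (by rw [Module.finrank_tensorProduct, Module.finrank_linearMap])).mp hinj

variable {L : Type*} [Field L] [Algebra F L]

theorem lTensor_phiLR_tmul (a c : D) (z : L ⊗[F] D) :
    LinearMap.lTensor L (phiLR (a ⊗ₜ[F] c)) z = ((1 : L) ⊗ₜ[F] a) * z * ((1 : L) ⊗ₜ[F] c) := by
  induction z with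
  | zero => simp
  | tmul l d =>
      rw [LinearMap.lTensor_tmul, phiLR_tmul, Algebra.TensorProduct.tmul_mul_tmul,
        Algebra.TensorProduct.tmul_mul_tmul]
      rw [one_mul, mul_one]
  | add u v hu hv => rw [map_add, hu, hv, mul_add, add_mul]

theorem lTensor_phiLR_mem (S : Subalgebra F (L ⊗[F] D))
    (hDS : ∀ d : D, (1 : L) ⊗ₜ[F] d ∈ S) (t : D ⊗[F] D) :
    ∀ z ∈ S, LinearMap.lTensor L (phiLR t) z ∈ S := by
  induction t with
  | zero => intro z hz; simp only [map_zero, LinearMap.lTensor_zero, LinearMap.zero_apply]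
            exact S.zero_mem
  | tmul a c =>
      intro z hz
      rw [lTensor_phiLR_tmul]
      exact S.mul_mem (S.mul_mem (hDS a) hz) (hDS c)
  | add u v hu hv =>
      intro z hz
      rw [map_add, LinearMap.lTensor_add, LinearMap.add_apply]
      exact S.add_mem (hu z hz) (hv z hz)

theorem lTensor_coord_eq {ι : Type*} (b : Module.Basis ι F D) (i : ι) (z : L ⊗[F] D) :
    LinearMap.lTensor L ((LinearMap.toSpanSingleton F D 1) ∘ₗ (b.coord i)) z
      = (coordT b L i z) ⊗ₜ[F] (1 : D) := by
  induction z with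
  | zero => simp
  | tmul l d =>
      rw [LinearMap.lTensor_tmul, coordT_tmul]
      simp only [LinearMap.comp_apply, LinearMap.toSpanSingleton_apply, Module.Basis.coord_apply]
      rw [TensorProduct.tmul_smul, TensorProduct.smul_tmul']
  | add u v hu hv => rw [map_add, map_add, hu, hv, TensorProduct.add_tmul]

end

open TensorProduct

/-- If `F ⊆ L` is a minimal field extension and `D` a finite-dimensional central division
`F`-algebra, then `1 ⊗ D` is a maximal `F`-subalgebra of `L ⊗[F] D`. -/
theorem stmt7 {F L D : Type*} [Field F] [Field L] [Algebra F L]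
    (hmin : ∀ K' : IntermediateField F L, K' = ⊥ ∨ K' = ⊤)
    (hne : (⊥ : IntermediateField F L) ≠ ⊤)
    [DivisionRing D] [Algebra F D] [FiniteDimensional F D]
    (hcentral : ∀ d : D, (∀ x : D, d * x = x * d) → ∃ c : F, d = algebraMap F D c)
    (S : Subalgebra F (L ⊗[F] D))
    (hS : (Algebra.TensorProduct.includeRight : D →ₐ[F] L ⊗[F] D).range < S) :
    S = ⊤ := by
  have hDS : ∀ d : D, (1 : L) ⊗ₜ[F] d ∈ S := fun d => hS.le ⟨d, rfl⟩
  set V : Subalgebra F L :=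
    S.comap (Algebra.TensorProduct.includeLeft : L →ₐ[F] L ⊗[F] D) with hVdef
  have hVmem : ∀ l : L, l ∈ V ↔ l ⊗ₜ[F] (1 : D) ∈ S := by
    intro l
    rw [hVdef, Subalgebra.mem_comap, Algebra.TensorProduct.includeLeft_apply]
  set b : Module.Basis (Fin (Module.finrank F D)) F D := Module.finBasis F D with hb
  have hcoordV : ∀ s ∈ S, ∀ i, coordT b L i s ∈ V := by
    intro s hs i
    obtain ⟨t, ht⟩ := phiLR_surjective hcentral
      ((LinearMap.toSpanSingleton F D 1) ∘ₗ (b.coord i))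
    have h1 : LinearMap.lTensor L (phiLR t) s ∈ S := lTensor_phiLR_mem S hDS t s hs
    rw [ht, lTensor_coord_eq] at h1
    exact (hVmem _).mpr h1
  rcases aux_dichotomy hmin V with hV | hV
  · exfalso
    refine not_le_of_gt hS ?_
    intro s hs
    have hrep := sum_coordT b s
    have hbotc : ∀ i, ∃ c : F, algebraMap F L c = coordT b L i s := by
      intro i
      have := hcoordV s hs i
      rw [hV, Algebra.mem_bot] at this
      exact this
    choose c hc using hbotc
    refine ⟨∑ i, c i • b i, ?_⟩
    have : (Algebra.TensorProduct.includeRight : D →ₐ[F] L ⊗[F] D) (∑ i, c i • b i)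
        = ∑ i, (coordT b L i s) ⊗ₜ[F] (b i) := by
      rw [Algebra.TensorProduct.includeRight_apply, TensorProduct.tmul_sum]
      refine Finset.sum_congr rfl fun i _ => ?_
      rw [← hc i, Algebra.algebraMap_eq_smul_one, ← TensorProduct.smul_tmul]
    exact this.trans hrep
  · rw [eq_top_iff]
    rintro z -
    induction z with
    | zero => exact S.zero_mem
    | tmul l d =>
        have hl : l ⊗ₜ[F] (1 : D) ∈ S := (hVmem l).mp (hV ▸ trivial)
        have heq : l ⊗ₜ[F] d = (l ⊗ₜ[F] (1 : D)) * ((1 : L) ⊗ₜ[F] d) := by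
          rw [Algebra.TensorProduct.tmul_mul_tmul, mul_one, one_mul]
        rw [heq]
        exact S.mul_mem hl (hDS d)
    | add u v hu hv => exact S.add_mem hu hv
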